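/- For λ > 0 and m ≠ n, the degenerate Hermite polynomials are orthogonal: ∫_{-∞}^{∞} (1+λ)^{-x²/λ} H_n(x|λ) H_m(x|λ) dx = 0; and for m = n, ∫_{-∞}^{∞} (1+λ)^{-x²/λ} [H_n(x|λ)]² dx = √(πλ/log(1+λ)) · 2ⁿ n! · (log(1+λ)/λ)ⁿ. -/

import Mathlib

open Real Finset MeasureTheory

noncomputable def dH (l x y : ℝ) (n : ℕ) : ℝ :=
  ∑ k ∈ Finset.range (n / 2 + 1),
    (Nat.factorial n : ℝ) / ((Nat.factorial (n - 2 * k) : ℝ) * (Nat.factorial k : ℝ)) *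
      (Real.log (1 + l) / l) ^ (n - k) * x ^ (n - 2 * k) * y ^ k

noncomputable def hermiteDeg (l : ℝ) (n : ℕ) (x : ℝ) : ℝ :=
  ∑ k ∈ Finset.range (n / 2 + 1),
    ((-1 : ℝ) ^ k * (Nat.factorial n : ℝ)) /
        ((Nat.factorial k : ℝ) * (Nat.factorial (n - 2 * k) : ℝ)) *
      (Real.log (1 + l) / l) ^ (n - k) * (2 * x) ^ (n - 2 * k)

namespace S17
open Polynomial

lemma integrable_pow_gauss (n : ℕ) : Integrable fun x : ℝ => x ^ n * rexp (-x ^ 2) := by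
  have h : Integrable fun x : ℝ =>
      ((n.factorial : ℝ) * rexp 2⁻¹) * rexp (-(2⁻¹ : ℝ) * x ^ 2) :=
    (integrable_exp_neg_mul_sq (by norm_num)).const_mul _
  refine h.mono' (Continuous.aestronglyMeasurable (by continuity)) ?_
  filter_upwards with x
  have hfac : (0:ℝ) < n.factorial := by positivity
  have hx : |x| ^ n ≤ (n.factorial : ℝ) * rexp |x| := by
    have h1 := Real.pow_div_factorial_le_exp (x := |x|) (abs_nonneg x) n
    rw [div_le_iff₀ hfac] at h1
    linarith [h1]
  calc ‖x ^ n * rexp (-x ^ 2)‖ = |x| ^ n * rexp (-x ^ 2) := by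
        rw [norm_mul, norm_pow, Real.norm_eq_abs, Real.norm_eq_abs, Real.abs_exp]
    _ ≤ ((n.factorial : ℝ) * rexp |x|) * rexp (-x ^ 2) :=
        mul_le_mul_of_nonneg_right hx (Real.exp_pos _).le
    _ = (n.factorial : ℝ) * rexp (|x| + -x ^ 2) := by rw [mul_assoc, ← Real.exp_add]
    _ ≤ (n.factorial : ℝ) * rexp (2⁻¹ + -(2⁻¹ * x ^ 2)) := by
        refine mul_le_mul_of_nonneg_left (Real.exp_le_exp.2 ?_) hfac.le
        nlinarith [sq_nonneg (|x| - 1), sq_abs x]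
    _ = ((n.factorial : ℝ) * rexp 2⁻¹) * rexp (-(2⁻¹ : ℝ) * x ^ 2) := by
        rw [Real.exp_add, neg_mul]; ring

lemma integrable_eval_gauss (p : Polynomial ℝ) :
    Integrable fun x : ℝ => eval x p * rexp (-x ^ 2) := by
  induction p using Polynomial.induction_on' with
  | add p q hp hq => simpa [add_mul] using hp.fun_add hq
  | monomial n a =>
      simpa [eval_monomial, mul_assoc] using (integrable_pow_gauss n).const_mul a

lemma integral_deriv_gauss (p : Polynomial ℝ) :
    ∫ x : ℝ, (eval x (derivative p) - 2 * x * eval x p) * rexp (-x ^ 2) = 0 := by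
  have hderiv : ∀ x : ℝ, HasDerivAt (fun y => eval y p * rexp (-y ^ 2))
      ((eval x (derivative p) - 2 * x * eval x p) * rexp (-x ^ 2)) x := by
    intro x
    have h1 : HasDerivAt (fun y : ℝ => eval y p) (eval x (derivative p)) x := p.hasDerivAt x
    have h0 : HasDerivAt (fun y : ℝ => -y ^ 2) (-(2 * x)) x := by
      simpa using ((hasDerivAt_pow 2 x).fun_neg)
    have h2 : HasDerivAt (fun y : ℝ => rexp (-y ^ 2)) (-(2 * x) * rexp (-x ^ 2)) x := by
      simpa [mul_comm] using h0.exp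
    have := h1.mul h2
    exact this.congr_deriv (by ring)
  have key : (fun x : ℝ => (eval x (derivative p) - 2 * x * eval x p) * rexp (-x ^ 2))
      = fun x : ℝ => eval x (derivative p - C 2 * X * p) * rexp (-x ^ 2) := by
    funext x; simp only [eval_sub, eval_mul, eval_C, eval_X]
  have hint : Integrable fun x : ℝ =>
      (eval x (derivative p) - 2 * x * eval x p) * rexp (-x ^ 2) := by
    rw [key]; exact integrable_eval_gauss _
  simpa using integral_eq_zero_of_hasDerivAt_of_integrable hderiv hint (integrable_eval_gauss p)

lemma integrable_xmul_eval_gauss (p : Polynomial ℝ) :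
    Integrable fun x : ℝ => 2 * x * eval x p * rexp (-x ^ 2) := by
  have : (fun x : ℝ => 2 * x * eval x p * rexp (-x ^ 2))
      = fun x : ℝ => eval x (C 2 * X * p) * rexp (-x ^ 2) := by
    funext x; simp [eval_mul]
  rw [this]; exact integrable_eval_gauss _

lemma integral_mul_deriv (p : Polynomial ℝ) :
    ∫ x : ℝ, 2 * x * eval x p * rexp (-x ^ 2)
      = ∫ x : ℝ, eval x (derivative p) * rexp (-x ^ 2) := by
  have h := integral_deriv_gauss p
  have e1 : (fun x : ℝ => (eval x (derivative p) - 2 * x * eval x p) * rexp (-x ^ 2))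
      = fun x : ℝ => eval x (derivative p) * rexp (-x ^ 2)
        - 2 * x * eval x p * rexp (-x ^ 2) := by
    funext x; ring
  rw [e1, integral_sub (integrable_eval_gauss _) (integrable_xmul_eval_gauss p)] at h
  linarith [h]


noncomputable def Hp : ℕ → Polynomial ℝ
  | 0 => 1
  | n+1 => C 2 * X * Hp n - derivative (Hp n)

lemma Hp_zero : Hp 0 = 1 := rfl
lemma Hp_succ (n : ℕ) : Hp (n+1) = C 2 * X * Hp n - derivative (Hp n) := rfl

lemma deriv_eq (n : ℕ) : derivative (Hp n) = C 2 * X * Hp n - Hp (n+1) := by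
  rw [Hp_succ n]; ring

lemma deriv_Hp_succ (n : ℕ) :
    derivative (Hp (n+1)) = C (2*(n+1) : ℝ) * Hp n := by
  induction n with
  | zero =>
    simp [Hp_succ, Hp_zero]
  | succ n ih =>
    rw [Hp_succ (n+1)]
    simp only [derivative_sub, derivative_mul, derivative_C, derivative_X, ih, deriv_eq n]
    push_cast
    rw [show (2*((n:ℝ)+1+1)) = 2 + 2*((n:ℝ)+1) by ring, C_add]
    ring

lemma deriv_Hp (n : ℕ) : derivative (Hp n) = C (2*n : ℝ) * Hp (n-1) := by
  cases n with
  | zero => simp [Hp_zero]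
  | succ n => rw [deriv_Hp_succ]; push_cast; ring_nf


noncomputable def I (n m : ℕ) : ℝ := ∫ x : ℝ, eval x (Hp n) * eval x (Hp m) * rexp (-x ^ 2)

lemma integrable_eval2 (P Q : Polynomial ℝ) :
    Integrable fun x : ℝ => eval x P * eval x Q * rexp (-x ^ 2) := by
  have : (fun x : ℝ => eval x P * eval x Q * rexp (-x ^ 2))
      = fun x : ℝ => eval x (P * Q) * rexp (-x ^ 2) := by
    funext x; rw [eval_mul]
  rw [this]; exact integrable_eval_gauss _

lemma I_rec (n m : ℕ) : I (n+1) m = 2 * m * I n (m-1) := by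
  have int1 : Integrable fun x : ℝ => 2 * x * eval x (Hp n * Hp m) * rexp (-x ^ 2) :=
    integrable_xmul_eval_gauss _
  have int2 : Integrable fun x : ℝ =>
      eval x (derivative (Hp n)) * eval x (Hp m) * rexp (-x ^ 2) := integrable_eval2 _ _
  have int3 : Integrable fun x : ℝ =>
      eval x (Hp n) * eval x (derivative (Hp m)) * rexp (-x ^ 2) := integrable_eval2 _ _
  have e1 : I (n+1) m = (∫ x : ℝ, 2 * x * eval x (Hp n * Hp m) * rexp (-x ^ 2))
      - ∫ x : ℝ, eval x (derivative (Hp n)) * eval x (Hp m) * rexp (-x ^ 2) := by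
    rw [I, ← integral_sub int1 int2]
    congr 1; funext x
    rw [Hp_succ n]
    simp only [eval_sub, eval_mul, eval_C, eval_X]
    ring
  have e2 : (∫ x : ℝ, eval x (derivative (Hp n * Hp m)) * rexp (-x ^ 2))
      = (∫ x : ℝ, eval x (derivative (Hp n)) * eval x (Hp m) * rexp (-x ^ 2))
        + ∫ x : ℝ, eval x (Hp n) * eval x (derivative (Hp m)) * rexp (-x ^ 2) := by
    rw [← integral_add int2 int3]
    congr 1; funext x
    simp only [derivative_mul, eval_add, eval_mul]
    ring
  rw [e1, integral_mul_deriv (Hp n * Hp m), e2]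
  have e3 : (∫ x : ℝ, eval x (Hp n) * eval x (derivative (Hp m)) * rexp (-x ^ 2))
      = 2 * m * I n (m-1) := by
    rw [I, ← MeasureTheory.integral_const_mul]
    congr 1; funext x
    rw [deriv_Hp m]
    simp only [eval_mul, eval_C]
    ring
  rw [e3]; ring

lemma I_symm (n m : ℕ) : I n m = I m n := by
  unfold I; congr 1; funext x; ring

lemma I_diag (n : ℕ) : I n n = 2 ^ n * n.factorial * Real.sqrt π := by
  induction n with
  | zero =>
      have : I 0 0 = ∫ x : ℝ, rexp (-x ^ 2) := by
        unfold I; congr 1; funext x; simp [Hp_zero]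
      rw [this]
      have := integral_gaussian 1
      simp only [one_mul, neg_mul] at this
      simpa using this
  | succ n ih =>
      rw [I_rec n (n+1)]
      simp only [Nat.add_sub_cancel, ih, Nat.factorial_succ]
      push_cast
      ring

lemma I_off_lt {m n : ℕ} (h : m < n) : I n m = 0 := by
  induction m generalizing n with
  | zero =>
      obtain ⟨k, rfl⟩ : ∃ k, n = k + 1 := ⟨n - 1, by omega⟩
      rw [I_rec k 0]
      simp
  | succ m ih =>
      obtain ⟨k, rfl⟩ : ∃ k, n = k + 1 := ⟨n - 1, by omega⟩
      rw [I_rec k (m+1)]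
      rw [Nat.add_sub_cancel, ih (by omega)]
      ring

lemma I_off {m n : ℕ} (h : m ≠ n) : I n m = 0 := by
  rcases lt_or_gt_of_ne h with h' | h'
  · exact I_off_lt h'
  · rw [I_symm]; exact I_off_lt h'


noncomputable def coef (n k : ℕ) : ℝ :=
  ((-1 : ℝ) ^ k * (Nat.factorial n : ℝ)) /
    ((Nat.factorial k : ℝ) * (Nat.factorial (n - 2 * k) : ℝ))

noncomputable def S (n : ℕ) (x : ℝ) : ℝ :=
  ∑ k ∈ Finset.range (n / 2 + 1), coef n k * (2 * x) ^ (n - 2 * k)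

lemma coef_zero (n : ℕ) : coef n 0 = 1 := by
  have : ((Nat.factorial n : ℝ)) ≠ 0 := by positivity
  simp [coef, div_self this]

lemma coef_step (n k : ℕ) (h : 2 * k + 1 ≤ n) :
    coef (n+2) (k+1) = coef (n+1) (k+1) - 2 * ((n:ℝ) + 1) * coef n k := by
  unfold coef
  have h1 : n + 2 - 2 * (k+1) = (n - (2*k+1)) + 1 := by omega
  have h2 : n + 1 - 2 * (k+1) = n - (2*k+1) := by omega
  have h3 : n - 2 * k = (n - (2*k+1)) + 1 := by omega
  rw [h1, h2, h3]
  have ha : ((n - (2*k+1) : ℕ) : ℝ) = (n : ℝ) - (2*k+1) := by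
    rw [Nat.cast_sub h]; push_cast; ring
  have hfk : ((Nat.factorial k : ℝ)) ≠ 0 := by positivity
  have hfa : ((Nat.factorial (n - (2*k+1)) : ℝ)) ≠ 0 := by positivity
  have hk1 : ((k:ℝ) + 1) ≠ 0 := by positivity
  have hn2k : (n:ℝ) - (2*k+1) + 1 ≠ 0 := by
    have : (2*k+1 : ℝ) ≤ (n:ℝ) := by exact_mod_cast h
    linarith
  rw [Nat.factorial_succ (n+1), Nat.factorial_succ n, Nat.factorial_succ k,
    Nat.factorial_succ (n - (2*k+1))]
  push_cast
  rw [ha]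
  rw [eq_sub_iff_add_eq, mul_div_assoc', div_add_div _ _ (by positivity) (by positivity), div_eq_div_iff (by positivity) (by positivity)]
  ring

lemma coef_bdry (r : ℕ) :
    coef (r+r+2) (r+1) = -(2 * ((r:ℝ) + (r:ℝ) + 1)) * coef (r+r) r := by
  unfold coef
  have h1 : r + r + 2 - 2 * (r+1) = 0 := by omega
  have h2 : r + r - 2 * r = 0 := by omega
  rw [h1, h2]
  have hfr : ((Nat.factorial r : ℝ)) ≠ 0 := by positivity
  have hr1 : ((r:ℝ) + 1) ≠ 0 := by positivity
  rw [show r+r+2 = (r+r+1)+1 from rfl, Nat.factorial_succ (r+r+1), Nat.factorial_succ (r+r),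
    Nat.factorial_succ r]
  push_cast
  field_simp
  ring


lemma S_rec (n : ℕ) (x : ℝ) :
    S (n+2) x = 2 * x * S (n+1) x - 2 * ((n:ℝ) + 1) * S n x := by
  have hA : S (n+2) x
      = (∑ k ∈ Finset.range (n/2+1), coef (n+2) (k+1) * (2*x) ^ (n - 2*k)) + (2*x) ^ (n+2) := by
    have h2 : (n+2)/2 + 1 = (n/2 + 1) + 1 := by omega
    rw [S, h2, Finset.sum_range_succ']
    congr 1
    · apply Finset.sum_congr rfl
      intro k _
      have h : n + 2 - 2*(k+1) = n - 2*k := by omega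
      rw [h]
    · rw [coef_zero]; simp
  have hB : 2 * x * S (n+1) x
      = (∑ k ∈ Finset.range ((n+1)/2), coef (n+1) (k+1) * (2*x) ^ (n - 2*k)) + (2*x) ^ (n+2) := by
    rw [S, Finset.mul_sum]
    have h1 : ∀ k ∈ Finset.range ((n+1)/2+1), 2*x * (coef (n+1) k * (2*x) ^ (n+1 - 2*k))
        = coef (n+1) k * (2*x) ^ (n+2 - 2*k) := by
      intro k hk
      simp only [Finset.mem_range] at hk
      have h : n+2-2*k = (n+1-2*k)+1 := by omega
      rw [h, pow_succ]; ring
    rw [Finset.sum_congr rfl h1, Finset.sum_range_succ']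
    congr 1
    · apply Finset.sum_congr rfl
      intro k _
      have h : n + 2 - 2*(k+1) = n - 2*k := by omega
      rw [h]
    · rw [coef_zero]; simp
  have hC : 2 * ((n:ℝ) + 1) * S n x
      = ∑ k ∈ Finset.range (n/2+1), (2 * ((n:ℝ)+1) * coef n k) * (2*x) ^ (n - 2*k) := by
    rw [S, Finset.mul_sum]
    exact Finset.sum_congr rfl fun k _ => by ring
  rw [hA, hB, hC]
  rcases Nat.even_or_odd n with he | ho
  · obtain ⟨r, rfl⟩ := he
    have hr2 : (r + r)/2 = r := by omega
    have hr1 : (r + r + 1)/2 = r := by omega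
    rw [hr2, hr1, Finset.sum_range_succ, Finset.sum_range_succ]
    have hsum : ∑ k ∈ Finset.range r, coef (r+r+2) (k+1) * (2*x) ^ (r+r - 2*k)
        = (∑ k ∈ Finset.range r, coef (r+r+1) (k+1) * (2*x) ^ (r+r - 2*k))
          - ∑ k ∈ Finset.range r, (2 * (((r:ℝ)+(r:ℝ)) + 1) * coef (r+r) k) * (2*x) ^ (r+r - 2*k) := by
      rw [← Finset.sum_sub_distrib]
      apply Finset.sum_congr rfl
      intro k hk
      simp only [Finset.mem_range] at hk
      have := coef_step (r+r) k (by omega)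
      push_cast at this ⊢
      rw [this]
      ring
    have hbd : coef (r+r+2) (r+1) = -(2 * ((r:ℝ) + (r:ℝ) + 1)) * coef (r+r) r := coef_bdry r
    push_cast at hsum hbd ⊢
    rw [hbd] at *
    linarith [hsum]
  · obtain ⟨r, rfl⟩ := ho
    have hr2 : (2*r + 1)/2 = r := by omega
    have hr1 : (2*r + 1 + 1)/2 = r + 1 := by omega
    rw [hr2, hr1]
    have hsum : ∑ k ∈ Finset.range (r+1), coef (2*r+1+2) (k+1) * (2*x) ^ (2*r+1 - 2*k)
        = (∑ k ∈ Finset.range (r+1), coef (2*r+1+1) (k+1) * (2*x) ^ (2*r+1 - 2*k))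
          - ∑ k ∈ Finset.range (r+1), (2 * (((2*r+1:ℕ):ℝ) + 1) * coef (2*r+1) k) * (2*x) ^ (2*r+1 - 2*k) := by
      rw [← Finset.sum_sub_distrib]
      apply Finset.sum_congr rfl
      intro k hk
      simp only [Finset.mem_range] at hk
      have := coef_step (2*r+1) k (by omega)
      push_cast at this ⊢
      rw [this]
      ring
    push_cast at hsum ⊢
    linarith [hsum]


lemma S_zero (x : ℝ) : S 0 x = 1 := by
  simp [S, coef_zero]

lemma S_one (x : ℝ) : S 1 x = 2 * x := by
  simp [S, coef_zero]

lemma Hp_eval (n : ℕ) : ∀ x : ℝ, eval x (Hp n) = S n x := by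
  induction n using Nat.twoStepInduction with
  | zero => intro x; simp [Hp_zero, S_zero]
  | one =>
      intro x
      have h1 : Hp 1 = C 2 * X := by
        rw [Hp_succ 0, Hp_zero]; simp
      rw [h1, S_one]; simp
  | more n ih1 ih2 =>
      intro x
      have recur : Hp (n+2) = C 2 * X * Hp (n+1) - C (2*((n:ℝ)+1)) * Hp n := by
        rw [Hp_succ (n+1), deriv_Hp_succ n]
      rw [recur]
      simp only [eval_sub, eval_mul, eval_C, eval_X]
      rw [ih2 x, ih1 x, S_rec]

lemma hermiteDeg_eq (l : ℝ) (hc : 0 < Real.log (1 + l) / l) (n : ℕ) (x : ℝ) :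
    hermiteDeg l n x = (Real.sqrt (Real.log (1 + l) / l)) ^ n
      * S n (Real.sqrt (Real.log (1 + l) / l) * x) := by
  set c := Real.log (1 + l) / l with hcdef
  set s := Real.sqrt c with hsdef
  have hs2 : s ^ 2 = c := Real.sq_sqrt hc.le
  rw [hermiteDeg, S, Finset.mul_sum]
  apply Finset.sum_congr rfl
  intro k hk
  simp only [Finset.mem_range] at hk
  have h2k : 2 * k ≤ n := by omega
  have key : s ^ n * s ^ (n - 2*k) = c ^ (n - k) := by
    rw [← pow_add, show n + (n - 2*k) = 2 * (n - k) from by omega, pow_mul, hs2]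
  rw [coef, show (2 * (s * x)) = s * (2 * x) from by ring, mul_pow]
  rw [← key]
  ring

end S17

theorem stmt17 (l : ℝ) (hl : 0 < l) :
    (∀ m n : ℕ, m ≠ n →
      ∫ x : ℝ, Real.exp (-(x ^ 2 * (Real.log (1 + l) / l))) *
          hermiteDeg l n x * hermiteDeg l m x = 0) ∧
    (∀ n : ℕ,
      ∫ x : ℝ, Real.exp (-(x ^ 2 * (Real.log (1 + l) / l))) * (hermiteDeg l n x) ^ 2 =
        Real.sqrt (Real.pi * l / Real.log (1 + l)) * 2 ^ n * (Nat.factorial n : ℝ) *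
          (Real.log (1 + l) / l) ^ n) := by
  have hlog : 0 < Real.log (1 + l) := Real.log_pos (by linarith)
  have hc : 0 < Real.log (1 + l) / l := div_pos hlog hl
  set c := Real.log (1 + l) / l with hcdef
  set s := Real.sqrt c with hsdef
  have hs : 0 < s := Real.sqrt_pos.2 hc
  have hs2 : s ^ 2 = c := Real.sq_sqrt hc.le
  have key : ∀ n m : ℕ, (∫ x : ℝ, Real.exp (-(x ^ 2 * c)) *
      hermiteDeg l n x * hermiteDeg l m x) = s ^ n * s ^ m * s⁻¹ * S17.I n m := by
    intro n m
    have h1 : (fun x : ℝ => Real.exp (-(x ^ 2 * c)) * hermiteDeg l n x * hermiteDeg l m x)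
        = fun x : ℝ => (s ^ n * s ^ m) •
            (Polynomial.eval (s * x) (S17.Hp n) * Polynomial.eval (s * x) (S17.Hp m)
              * Real.exp (-(s * x) ^ 2)) := by
      funext x
      rw [S17.hermiteDeg_eq l hc n x, S17.hermiteDeg_eq l hc m x, ← hcdef, ← hsdef,
        S17.Hp_eval n (s * x), S17.Hp_eval m (s * x)]
      have : (s * x) ^ 2 = x ^ 2 * c := by
        rw [mul_pow, hs2]; ring
      rw [this, smul_eq_mul]
      ring
    rw [h1, MeasureTheory.integral_smul, MeasureTheory.Measure.integral_comp_mul_left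
      (fun y : ℝ => Polynomial.eval y (S17.Hp n) * Polynomial.eval y (S17.Hp m)
        * Real.exp (-y ^ 2)) s]
    rw [abs_of_pos (inv_pos.2 hs)]
    simp only [smul_eq_mul, S17.I]
    ring
  have hsqrt : Real.sqrt Real.pi * s⁻¹ = Real.sqrt (Real.pi * l / Real.log (1 + l)) := by
    have hcc : Real.pi * l / Real.log (1 + l) = Real.pi / c := by
      rw [hcdef]
      field_simp
    rw [hcc, Real.sqrt_div Real.pi_nonneg c, div_eq_mul_inv, hsdef]
  constructor
  · intro m n hmn
    rw [key n m, S17.I_off hmn, mul_zero]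
  · intro n
    have hsq : (∫ x : ℝ, Real.exp (-(x ^ 2 * c)) * (hermiteDeg l n x) ^ 2)
        = ∫ x : ℝ, Real.exp (-(x ^ 2 * c)) * hermiteDeg l n x * hermiteDeg l n x := by
      congr 1; funext x; ring
    rw [hsq, key n n, S17.I_diag n]
    have hpow : s ^ n * s ^ n = c ^ n := by
      rw [← pow_add, ← two_mul, pow_mul, hs2]
    calc s ^ n * s ^ n * s⁻¹ * (2 ^ n * (n.factorial : ℝ) * Real.sqrt Real.pi)
        = (Real.sqrt Real.pi * s⁻¹) * 2 ^ n * (n.factorial : ℝ) * c ^ n := by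
          rw [← hpow]; ring
      _ = Real.sqrt (Real.pi * l / Real.log (1 + l)) * 2 ^ n * (n.factorial : ℝ) * c ^ n := by
          rw [hsqrt]
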